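/- Let 0 < p < ∞, Ψ ∈ 𝓛, and μ a finite positive Borel measure on the unit disc 𝔻. Then the quantity ‖f‖ = (∫_𝔻 |f|^p Ψ(|f|) dμ)^{1/p} satisfies a quasi-triangle inequality: there exists K = K(p, Ψ) ≥ 1 such that ‖f + g‖ ≤ K(‖f‖ + ‖g‖) for all measurable f, g with ‖f‖, ‖g‖ < ∞. -/

import Mathlib

open MeasureTheory Real Set
open scoped ENNReal NNReal

/-- `Ψ` is essentially increasing on `[0,∞)`. -/
def EssInc (Ψ : ℝ → ℝ) : Prop := ∃ C > (0:ℝ), ∀ x y : ℝ, 0 ≤ x → x ≤ y → Ψ x ≤ C * Ψ y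

/-- `Ψ` is essentially decreasing on `[0,∞)`. -/
def EssDec (Ψ : ℝ → ℝ) : Prop := ∃ C > (0:ℝ), ∀ x y : ℝ, 0 ≤ x → x ≤ y → Ψ y ≤ C * Ψ x

/-- The doubling property `Ψ(x) ≍ Ψ(x²)` on `[0,∞)`. -/
def Doubling (Ψ : ℝ → ℝ) : Prop :=
  ∃ c > (0:ℝ), ∃ C > (0:ℝ), ∀ x : ℝ, 0 ≤ x → c * Ψ (x ^ 2) ≤ Ψ x ∧ Ψ x ≤ C * Ψ (x ^ 2)

/-- The class `𝓛`: positive, essentially monotonic, doubling. -/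
def InL (Ψ : ℝ → ℝ) : Prop :=
  (∀ x : ℝ, 0 ≤ x → 0 < Ψ x) ∧ (EssInc Ψ ∨ EssDec Ψ) ∧ Doubling Ψ

/-- The unit disc in `ℂ`. -/
noncomputable def diskD : Set ℂ := Metric.ball 0 1

/-- The Carleson square `S(a)` (with `S(0) = 𝔻`). -/
noncomputable def cSq (a : ℂ) : Set ℂ :=
  if a = 0 then diskD else
    {z ∈ diskD | ‖a‖ ≤ ‖z‖ ∧
      |Complex.arg a - Complex.arg z| < (1 - ‖a‖) / 2}

/-- `ω(S) = ∫_S ω dA` where `dA` is the normalized area measure. -/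
noncomputable def wInt (ω : ℝ → ℝ) (S : Set ℂ) : ℝ :=
  (1 / Real.pi) * ∫ z in S, ω (‖z‖) ∂volume

/-- `‖f‖^p_{A^p_{ω,Ψ}} = ∫_𝔻 |f|^p Ψ(|f|) ω dA`, as an extended real. -/
noncomputable def apNormE (p : ℝ) (ω Ψ : ℝ → ℝ) (f : ℂ → ℂ) : ℝ≥0∞ :=
  ENNReal.ofReal (1 / Real.pi) *
    ∫⁻ z in diskD, ENNReal.ofReal
      (‖f z‖ ^ p * Ψ (‖f z‖) * ω (‖z‖)) ∂volume
lemma zzGrowth {r s : ℝ} (hr : 1 ≤ r) (hs : 1 < s) :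
    ∃ M : ℝ, 1 ≤ M ∧ ∀ n : ℕ, r ^ n ≤ M * s ^ (2 ^ n) := by
  obtain ⟨N, hN⟩ := pow_unbounded_of_one_lt r hs
  refine ⟨r ^ N, one_le_pow₀ hr, fun n => ?_⟩
  have hs1 : (1:ℝ) ≤ s := hs.le
  rcases le_or_gt n N with h | h
  · calc r ^ n ≤ r ^ N := pow_le_pow_right₀ hr h
      _ = r ^ N * 1 := (mul_one _).symm
      _ ≤ r ^ N * s ^ (2 ^ n) := by gcongr; exact one_le_pow₀ hs1
  · have key : N * (n - N) ≤ 2 ^ n := by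
      calc N * (n - N) ≤ 2 ^ N * 2 ^ (n - N) :=
            Nat.mul_le_mul (Nat.le_of_lt (Nat.lt_two_pow_self (n := N))) (Nat.le_of_lt Nat.lt_two_pow_self)
        _ = 2 ^ (N + (n - N)) := (pow_add 2 N (n-N)).symm
        _ = 2 ^ n := by rw [Nat.add_sub_cancel' h.le]
    calc r ^ n = r ^ N * r ^ (n - N) := by rw [← pow_add, Nat.add_sub_cancel' h.le]
      _ ≤ r ^ N * (s ^ N) ^ (n - N) := by
          have h0 : (0:ℝ) ≤ r := by linarith
          gcongr
      _ = r ^ N * s ^ (N * (n - N)) := by rw [← pow_mul]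
      _ ≤ r ^ N * s ^ (2 ^ n) := by
          have := pow_le_pow_right₀ hs1 key
          have h2 : (0:ℝ) ≤ r ^ N := by positivity
          nlinarith [pow_nonneg (le_trans zero_le_one hs1) (N * (n-N))]

lemma zzIterUp {Ψ : ℝ → ℝ} {C₂ : ℝ} (hC₂ : 1 ≤ C₂)
    (h : ∀ x : ℝ, 0 ≤ x → Ψ x ≤ C₂ * Ψ (x ^ 2)) :
    ∀ n : ℕ, ∀ x : ℝ, 0 ≤ x → Ψ x ≤ C₂ ^ n * Ψ (x ^ (2 ^ n)) := by
  intro n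
  induction n with
  | zero => intro x hx; simpa using le_refl (Ψ x)
  | succ n ih =>
    intro x hx
    have h1 := ih x hx
    have h2 := h (x ^ (2 ^ n)) (pow_nonneg hx _)
    have he : (x ^ (2 ^ n)) ^ 2 = x ^ (2 ^ (n+1)) := by
      rw [← pow_mul, pow_succ]
    rw [he] at h2
    calc Ψ x ≤ C₂ ^ n * Ψ (x ^ (2 ^ n)) := h1
      _ ≤ C₂ ^ n * (C₂ * Ψ (x ^ (2 ^ (n+1)))) := by
          have : (0:ℝ) ≤ C₂ ^ n := by positivity
          nlinarith
      _ = C₂ ^ (n+1) * Ψ (x ^ (2 ^ (n+1))) := by ring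

lemma zzLowBound {Ψ : ℝ → ℝ} {C C₂ : ℝ} (hC : 1 ≤ C) (hC₂ : 1 ≤ C₂)
    (hdec : ∀ x y : ℝ, 0 ≤ x → x ≤ y → Ψ y ≤ C * Ψ x)
    (h : ∀ x : ℝ, 0 ≤ x → Ψ x ≤ C₂ * Ψ (x ^ 2)) :
    ∀ n : ℕ, ∀ y : ℝ, 0 ≤ y → y ≤ 2 ^ (2 ^ n) → Ψ 2 ≤ C * C₂ ^ n * Ψ y := by
  intro n
  induction n with
  | zero =>
    intro y hy hy2
    simp only [pow_zero, pow_one] at hy2 ⊢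
    simpa using hdec y 2 hy hy2
  | succ n ih =>
    intro y hy hy2
    have ht : Real.sqrt y ≤ 2 ^ (2 ^ n) := by
      have : y ≤ (2 ^ (2 ^ n) : ℝ) ^ 2 := by
        rwa [← pow_mul, ← pow_succ] 
      calc Real.sqrt y ≤ Real.sqrt ((2 ^ (2 ^ n) : ℝ) ^ 2) := Real.sqrt_le_sqrt this
        _ = 2 ^ (2 ^ n) := Real.sqrt_sq (by positivity)
    have h1 := ih (Real.sqrt y) (Real.sqrt_nonneg y) ht
    have h2 := h (Real.sqrt y) (Real.sqrt_nonneg y)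
    rw [Real.sq_sqrt hy] at h2
    calc Ψ 2 ≤ C * C₂ ^ n * Ψ (Real.sqrt y) := h1
      _ ≤ C * C₂ ^ n * (C₂ * Ψ y) := by
          have : (0:ℝ) ≤ C * C₂ ^ n := by positivity
          nlinarith
      _ = C * C₂ ^ (n+1) * Ψ y := by ring

lemma zzHpowAux {p : ℝ} : ∀ t : ℝ, 0 ≤ t → ∀ k : ℕ, (t ^ k) ^ p = (t ^ p) ^ k := by
  intro t ht k
  rw [← Real.rpow_natCast t k, ← Real.rpow_natCast (t ^ p) k,
    ← Real.rpow_mul ht, ← Real.rpow_mul ht, mul_comm]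

lemma zzPhiMono {p : ℝ} (hp : 0 < p) {Ψ : ℝ → ℝ} (hΨ : InL Ψ) :
    ∃ K : ℝ, 1 ≤ K ∧ ∀ x y : ℝ, 0 ≤ x → x ≤ y → x ^ p * Ψ x ≤ K * (y ^ p * Ψ y) := by
  obtain ⟨hpos, hmono, c, hc, C₂', hC₂', hdb⟩ := hΨ
  rcases hmono with ⟨C₁, hC₁, hinc⟩ | ⟨C', hC', hdec'⟩
  · -- essentially increasing: easy case
    refine ⟨max C₁ 1, le_max_right _ _, fun x y hx hxy => ?_⟩
    have hy : 0 ≤ y := hx.trans hxy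
    have hΨy := hpos y hy
    have h1 : Ψ x ≤ max C₁ 1 * Ψ y :=
      (hinc x y hx hxy).trans (by nlinarith [le_max_left C₁ 1])
    have h2 : x ^ p ≤ y ^ p := Real.rpow_le_rpow hx hxy hp.le
    have hxp : (0:ℝ) ≤ x ^ p := Real.rpow_nonneg hx p
    calc x ^ p * Ψ x ≤ x ^ p * (max C₁ 1 * Ψ y) := mul_le_mul_of_nonneg_left h1 hxp
      _ ≤ y ^ p * (max C₁ 1 * Ψ y) := by
          apply mul_le_mul_of_nonneg_right h2; positivity
      _ = max C₁ 1 * (y ^ p * Ψ y) := by ring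
  · -- essentially decreasing
    set C : ℝ := max C' 1 with hCdef
    have hC : 1 ≤ C := le_max_right _ _
    have hC0 : (0:ℝ) < C := by linarith
    have hdec : ∀ x y : ℝ, 0 ≤ x → x ≤ y → Ψ y ≤ C * Ψ x := by
      intro x y hx hxy
      have := hdec' x y hx hxy
      have hΨx := hpos x hx
      nlinarith [le_max_left C' 1]
    set C₂ : ℝ := max C₂' 1 with hC₂def
    have hC₂ : 1 ≤ C₂ := le_max_right _ _
    have hC₂0 : (0:ℝ) < C₂ := by linarith
    have hup : ∀ x : ℝ, 0 ≤ x → Ψ x ≤ C₂ * Ψ (x ^ 2) := by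
      intro x hx
      have := (hdb x hx).2
      have hΨx2 := hpos (x ^ 2) (by positivity)
      nlinarith [le_max_left C₂' 1]
    set s2 : ℝ := (2:ℝ) ^ p with hs2def
    have hs2 : 1 < s2 := Real.one_lt_rpow_iff_of_pos (by norm_num) |>.2 (by norm_num [hp])
    have hs2pos : 0 < s2 := lt_trans one_pos hs2
    obtain ⟨M, hM1, hM⟩ := zzGrowth hC₂ hs2
    have hM0 : (0:ℝ) < M := by linarith
    have hΨ0 := hpos 0 le_rfl
    have hΨ2 := hpos 2 (by norm_num)
    have hΨ4 := hpos 4 (by norm_num)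
    have haux : ∀ k : ℕ, 1 ≤ k → ∀ u : ℝ, s2 ≤ u → u * s2 ^ k ≤ s2 * u ^ k := by
      intro k hk u hu
      obtain ⟨m, rfl⟩ := Nat.exists_eq_add_of_le hk
      have h1 : s2 ^ m ≤ u ^ m := pow_le_pow_left₀ hs2pos.le hu m
      have hu0 : 0 ≤ u := hs2pos.le.trans hu
      calc u * s2 ^ (1 + m) = (u * s2) * s2 ^ m := by ring
        _ ≤ (u * s2) * u ^ m := by
            apply mul_le_mul_of_nonneg_left h1; positivity
        _ = s2 * u ^ (1 + m) := by ring
    -- Claim A : lower bound on y^p * Ψ y for y > 2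
    have claimA : ∀ y : ℝ, 2 < y → Ψ 2 ≤ (C * C₂ * M) * (y ^ p * Ψ y) := by
      intro y hy2
      have hy0 : (0:ℝ) ≤ y := by linarith
      have hΨy := hpos y hy0
      have hex : ∃ n : ℕ, y ≤ 2 ^ (2 ^ n) := by
        obtain ⟨k, hk⟩ := pow_unbounded_of_one_lt y (by norm_num : (1:ℝ) < 2)
        exact ⟨k, hk.le.trans (pow_le_pow_right₀ (by norm_num) (Nat.le_of_lt (Nat.lt_two_pow_self (n := k))))⟩
      have hny : y ≤ 2 ^ (2 ^ Nat.find hex) := Nat.find_spec hex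
      have hn1 : 1 ≤ Nat.find hex := by
        by_contra h
        have h0 : Nat.find hex = 0 := by omega
        rw [h0] at hny; norm_num at hny; linarith
      set m := Nat.find hex - 1 with hm
      have hfind : Nat.find hex = m + 1 := by omega
      have hmin : ¬ y ≤ 2 ^ 2 ^ m := Nat.find_min hex (by omega)
      push_neg at hmin
      have hyp : s2 ^ (2 ^ m) ≤ y ^ p := by
        have h1 : ((2:ℝ) ^ (2 ^ m)) ^ p ≤ y ^ p :=
          Real.rpow_le_rpow (by positivity) hmin.le hp.le
        rwa [zzHpowAux 2 (by norm_num)] at h1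
      rw [hfind] at hny
      have hlow := zzLowBound hC hC₂ hdec hup (m + 1) y hy0 hny
      have hC₂b : C₂ ^ (m + 1) ≤ C₂ * (M * s2 ^ (2 ^ m)) := by
        have := hM m
        calc C₂ ^ (m+1) = C₂ * C₂ ^ m := by ring
          _ ≤ C₂ * (M * s2 ^ (2 ^ m)) := mul_le_mul_of_nonneg_left this hC₂0.le
      calc Ψ 2 ≤ C * C₂ ^ (m+1) * Ψ y := hlow
        _ ≤ C * (C₂ * (M * s2 ^ (2 ^ m))) * Ψ y := by
            apply mul_le_mul_of_nonneg_right _ hΨy.le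
            exact mul_le_mul_of_nonneg_left hC₂b hC0.le
        _ ≤ C * (C₂ * (M * y ^ p)) * Ψ y := by
            apply mul_le_mul_of_nonneg_right _ hΨy.le
            have h2 : M * s2 ^ (2 ^ m) ≤ M * y ^ p := mul_le_mul_of_nonneg_left hyp hM0.le
            have h3 : C₂ * (M * s2 ^ (2 ^ m)) ≤ C₂ * (M * y ^ p) :=
              mul_le_mul_of_nonneg_left h2 hC₂0.le
            exact mul_le_mul_of_nonneg_left h3 hC0.le
        _ = (C * C₂ * M) * (y ^ p * Ψ y) := by ring
    set K₁ : ℝ := C * C₂ * M * s2 with hK₁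
    set K₂ : ℝ := C * C * Ψ 0 / Ψ 4 with hK₂
    set K₃ : ℝ := s2 * C * Ψ 0 * (C * C₂ * M) / Ψ 2 with hK₃
    have hK₁1 : 1 ≤ K₁ := by
      rw [hK₁]
      have h1 : 1 ≤ C * C₂ := one_le_mul_of_one_le_of_one_le hC hC₂
      have h2 : 1 ≤ C * C₂ * M := by nlinarith
      nlinarith
    set K : ℝ := max K₁ (max K₂ K₃) with hK
    have hK1 : 1 ≤ K := hK₁1.trans (le_max_left _ _)
    refine ⟨K, hK1, fun x y hx hxy => ?_⟩
    have hy0 : 0 ≤ y := hx.trans hxy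
    have hΨx := hpos x hx
    have hΨy := hpos y hy0
    have hyp0 : (0:ℝ) ≤ y ^ p * Ψ y := by positivity
    have hxp0 : (0:ℝ) ≤ x ^ p := Real.rpow_nonneg hx p
    rcases le_or_gt 2 x with hx2 | hx2
    · -- x ≥ 2 branch
      have hx1 : (1:ℝ) < x := by linarith
      have hx0 : (0:ℝ) ≤ x := by linarith
      have hex : ∃ n : ℕ, y ≤ x ^ (2 ^ n) := by
        obtain ⟨k, hk⟩ := pow_unbounded_of_one_lt y hx1
        exact ⟨k, hk.le.trans (pow_le_pow_right₀ hx1.le (Nat.le_of_lt (Nat.lt_two_pow_self (n := k))))⟩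
      have hny : y ≤ x ^ (2 ^ Nat.find hex) := Nat.find_spec hex
      have hΨcomp : Ψ x ≤ C * C₂ ^ (Nat.find hex) * Ψ y := by
        have h1 := zzIterUp hC₂ hup (Nat.find hex) x hx0
        have h2 := hdec y (x ^ 2 ^ Nat.find hex) hy0 hny
        calc Ψ x ≤ C₂ ^ (Nat.find hex) * Ψ (x ^ 2 ^ Nat.find hex) := h1
          _ ≤ C₂ ^ (Nat.find hex) * (C * Ψ y) := by
              apply mul_le_mul_of_nonneg_left h2; positivity
          _ = C * C₂ ^ (Nat.find hex) * Ψ y := by ring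
      rcases Nat.eq_zero_or_pos (Nat.find hex) with h0 | hn1
      · -- n = 0 : x = y
        rw [h0] at hny; norm_num at hny
        have hxe : x = y := le_antisymm hxy hny
        subst hxe
        have : (0:ℝ) ≤ x ^ p * Ψ x := by positivity
        nlinarith
      · set m := Nat.find hex - 1 with hm
        have hfind : Nat.find hex = m + 1 := by omega
        have hmin : ¬ y ≤ x ^ 2 ^ m := Nat.find_min hex (by omega)
        push_neg at hmin
        have hu : s2 ≤ x ^ p := Real.rpow_le_rpow (by norm_num) hx2 hp.le
        have hyp : (x ^ p) ^ (2 ^ m) ≤ y ^ p := by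
          rw [← zzHpowAux x hx0]
          exact Real.rpow_le_rpow (pow_nonneg hx0 _) hmin.le hp.le
        have key : x ^ p * s2 ^ 2 ^ m ≤ s2 * y ^ p := by
          calc x ^ p * s2 ^ 2 ^ m ≤ s2 * (x ^ p) ^ 2 ^ m :=
                haux (2 ^ m) Nat.one_le_two_pow (x ^ p) hu
            _ ≤ s2 * y ^ p := mul_le_mul_of_nonneg_left hyp hs2pos.le
        rw [hfind] at hΨcomp
        have hC₂b : C₂ ^ (m + 1) ≤ C₂ * (M * s2 ^ (2 ^ m)) := by
          have := hM m
          calc C₂ ^ (m+1) = C₂ * C₂ ^ m := by ring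
            _ ≤ C₂ * (M * s2 ^ (2 ^ m)) := mul_le_mul_of_nonneg_left this hC₂0.le
        have main : x ^ p * Ψ x ≤ K₁ * (y ^ p * Ψ y) := by
          calc x ^ p * Ψ x ≤ x ^ p * (C * C₂ ^ (m+1) * Ψ y) :=
                mul_le_mul_of_nonneg_left hΨcomp hxp0
            _ ≤ x ^ p * (C * (C₂ * (M * s2 ^ 2 ^ m)) * Ψ y) := by
                apply mul_le_mul_of_nonneg_left _ hxp0
                apply mul_le_mul_of_nonneg_right _ hΨy.le
                exact mul_le_mul_of_nonneg_left hC₂b hC0.le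
            _ = (C * C₂ * M * Ψ y) * (x ^ p * s2 ^ 2 ^ m) := by ring
            _ ≤ (C * C₂ * M * Ψ y) * (s2 * y ^ p) := by
                apply mul_le_mul_of_nonneg_left key; positivity
            _ = K₁ * (y ^ p * Ψ y) := by rw [hK₁]; ring
        have : K₁ * (y ^ p * Ψ y) ≤ K * (y ^ p * Ψ y) :=
          mul_le_mul_of_nonneg_right (le_max_left _ _) hyp0
        linarith
    · rcases le_or_gt y 4 with hy4 | hy4
      · -- small branch, K₂
        have h1 : Ψ x ≤ C * Ψ 0 := hdec 0 x le_rfl hx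
        have h2 : Ψ 4 ≤ C * Ψ y := hdec y 4 hy0 hy4
        have hxp : x ^ p ≤ y ^ p := Real.rpow_le_rpow hx hxy hp.le
        have main : x ^ p * Ψ x ≤ K₂ * (y ^ p * Ψ y) := by
          rw [hK₂, div_mul_eq_mul_div, le_div_iff₀ hΨ4]
          have e1 : x ^ p * Ψ x ≤ y ^ p * (C * Ψ 0) :=
            mul_le_mul hxp h1 hΨx.le (by positivity)
          have e2 : (x ^ p * Ψ x) * Ψ 4 ≤ (y ^ p * (C * Ψ 0)) * (C * Ψ y) :=
            mul_le_mul e1 h2 hΨ4.le (by positivity)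
          have e3 : (y ^ p * (C * Ψ 0)) * (C * Ψ y) = C * C * Ψ 0 * (y ^ p * Ψ y) := by ring
          linarith
        have : K₂ * (y ^ p * Ψ y) ≤ K * (y ^ p * Ψ y) :=
          mul_le_mul_of_nonneg_right ((le_max_left K₂ K₃).trans (le_max_right K₁ _)) hyp0
        linarith
      · -- y > 4 branch, K₃
        have hA := claimA y (by linarith)
        have hxp2 : x ^ p ≤ s2 := Real.rpow_le_rpow hx (by linarith) hp.le
        have e1 : x ^ p * Ψ x ≤ s2 * (C * Ψ 0) :=
          mul_le_mul hxp2 (hdec 0 x le_rfl hx) hΨx.le (by positivity)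
        have main : x ^ p * Ψ x ≤ K₃ * (y ^ p * Ψ y) := by
          rw [hK₃, div_mul_eq_mul_div, le_div_iff₀ hΨ2]
          have e2 : (x ^ p * Ψ x) * Ψ 2 ≤ (s2 * (C * Ψ 0)) * ((C * C₂ * M) * (y ^ p * Ψ y)) :=
            mul_le_mul e1 hA hΨ2.le (by positivity)
          have e3 : (s2 * (C * Ψ 0)) * ((C * C₂ * M) * (y ^ p * Ψ y))
              = s2 * C * Ψ 0 * (C * C₂ * M) * (y ^ p * Ψ y) := by ring
          linarith
        have : K₃ * (y ^ p * Ψ y) ≤ K * (y ^ p * Ψ y) :=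
          mul_le_mul_of_nonneg_right ((le_max_right K₂ K₃).trans (le_max_right K₁ _)) hyp0
        linarith

lemma zzPsiDouble {Ψ : ℝ → ℝ} (hΨ : InL Ψ) :
    ∃ D : ℝ, 1 ≤ D ∧ ∀ t : ℝ, 0 ≤ t → Ψ (2 * t) ≤ D * Ψ t := by
  obtain ⟨hpos, hmono, c, hc, C₂, hC₂, hdb⟩ := hΨ
  rcases hmono with ⟨C₁, hC₁, hinc⟩ | ⟨C', hC', hdec⟩
  · have hΨ0 := hpos 0 le_rfl
    have hΨ4 := hpos 4 (by norm_num)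
    set D : ℝ := max 1 (max (C₁ / c) (C₁ * C₁ * Ψ 4 / Ψ 0)) with hD
    refine ⟨D, le_max_left _ _, fun t ht => ?_⟩
    have hΨt := hpos t ht
    rcases le_or_gt 2 t with h2 | h2
    · have h2t : 2 * t ≤ t ^ 2 := by nlinarith
      have e1 : Ψ (2 * t) ≤ C₁ * Ψ (t ^ 2) := hinc (2*t) (t^2) (by linarith) h2t
      have e2 : c * Ψ (t ^ 2) ≤ Ψ t := (hdb t ht).1
      have hDb : C₁ / c ≤ D := (le_max_left _ _).trans (le_max_right _ _)
      have : Ψ (2 * t) ≤ (C₁ / c) * Ψ t := by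
        rw [div_mul_eq_mul_div, le_div_iff₀ hc]
        nlinarith
      nlinarith
    · have e1 : Ψ (2 * t) ≤ C₁ * Ψ 4 := hinc (2*t) 4 (by linarith) (by linarith)
      have e2 : Ψ 0 ≤ C₁ * Ψ t := hinc 0 t le_rfl ht
      have hDb : C₁ * C₁ * Ψ 4 / Ψ 0 ≤ D := (le_max_right _ _).trans (le_max_right _ _)
      have hΨ2t := hpos (2 * t) (by linarith)
      have : Ψ (2 * t) ≤ (C₁ * C₁ * Ψ 4 / Ψ 0) * Ψ t := by
        rw [div_mul_eq_mul_div, le_div_iff₀ hΨ0]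
        nlinarith [mul_le_mul e1 e2 hΨ0.le (by positivity : (0:ℝ) ≤ C₁ * Ψ 4)]
      nlinarith
  · refine ⟨max C' 1, le_max_right _ _, fun t ht => ?_⟩
    have hΨt := hpos t ht
    have := hdec t (2*t) ht (by linarith)
    nlinarith [le_max_left C' 1]

lemma zzPointwise {p : ℝ} (hp : 0 < p) {Ψ : ℝ → ℝ} (hΨ : InL Ψ) :
    ∃ C₀ : ℝ, 1 ≤ C₀ ∧ ∀ s a b : ℝ, 0 ≤ s → 0 ≤ a → 0 ≤ b → s ≤ a + b →
      s ^ p * Ψ s ≤ C₀ * (a ^ p * Ψ a + b ^ p * Ψ b) := by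
  obtain ⟨K, hK1, hK⟩ := zzPhiMono hp hΨ
  obtain ⟨D, hD1, hD⟩ := zzPsiDouble hΨ
  have hpos := hΨ.1
  set s2 : ℝ := (2:ℝ) ^ p with hs2
  have hs2_1 : 1 ≤ s2 := Real.one_le_rpow (by norm_num) hp.le
  have hKsD : 1 ≤ K * s2 * D :=
    one_le_mul_of_one_le_of_one_le (one_le_mul_of_one_le_of_one_le hK1 hs2_1) hD1
  refine ⟨K * s2 * D, hKsD, fun s a b hs ha hb hsab => ?_⟩
  set m : ℝ := max a b with hm
  have hm0 : 0 ≤ m := ha.trans (le_max_left _ _)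
  have hΨm := hpos m hm0
  have hs2m : s ≤ 2 * m := by
    have : a + b ≤ 2 * m := by
      rw [two_mul]; exact add_le_add (le_max_left _ _) (le_max_right _ _)
    linarith
  have e1 : s ^ p * Ψ s ≤ K * ((2 * m) ^ p * Ψ (2 * m)) := hK s (2*m) hs hs2m
  have e2 : (2 * m) ^ p = s2 * m ^ p := Real.mul_rpow (by norm_num) hm0
  have e3 : Ψ (2 * m) ≤ D * Ψ m := hD m hm0
  have e4 : m ^ p * Ψ m ≤ a ^ p * Ψ a + b ^ p * Ψ b := by
    rcases max_cases a b with ⟨h1, _⟩ | ⟨h1, _⟩ <;> rw [hm, h1]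
    · have : (0:ℝ) ≤ b ^ p * Ψ b := by
        have := hpos b hb; positivity
      linarith
    · have : (0:ℝ) ≤ a ^ p * Ψ a := by
        have := hpos a ha; positivity
      linarith
  have hmp : (0:ℝ) ≤ m ^ p := Real.rpow_nonneg hm0 p
  have e5 : (2 * m) ^ p * Ψ (2 * m) ≤ s2 * (D * (m ^ p * Ψ m)) := by
    rw [e2]
    calc s2 * m ^ p * Ψ (2 * m) ≤ s2 * m ^ p * (D * Ψ m) := by
          apply mul_le_mul_of_nonneg_left e3; positivity
      _ = s2 * (D * (m ^ p * Ψ m)) := by ring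
  calc s ^ p * Ψ s ≤ K * ((2 * m) ^ p * Ψ (2 * m)) := e1
    _ ≤ K * (s2 * (D * (m ^ p * Ψ m))) := by
        apply mul_le_mul_of_nonneg_left e5; linarith
    _ = (K * s2 * D) * (m ^ p * Ψ m) := by ring
    _ ≤ (K * s2 * D) * (a ^ p * Ψ a + b ^ p * Ψ b) := by
        apply mul_le_mul_of_nonneg_left e4; linarith

theorem stmt8 (p : ℝ) (hp : 0 < p) (Ψ : ℝ → ℝ) (hΨ : InL Ψ) (hΨm : Measurable Ψ)
    (μ : Measure ℂ) [IsFiniteMeasure μ] :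
    ∃ K : ℝ, 1 ≤ K ∧ ∀ f g : ℂ → ℂ, Measurable f → Measurable g →
      (∫⁻ z in diskD, ENNReal.ofReal
          (‖f z‖ ^ p * Ψ (‖f z‖)) ∂μ) ≠ ⊤ →
      (∫⁻ z in diskD, ENNReal.ofReal
          (‖g z‖ ^ p * Ψ (‖g z‖)) ∂μ) ≠ ⊤ →
      (∫⁻ z in diskD, ENNReal.ofReal
          (‖f z + g z‖ ^ p * Ψ (‖f z + g z‖)) ∂μ) ^ (1/p) ≤
        ENNReal.ofReal K *
          ((∫⁻ z in diskD, ENNReal.ofReal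
              (‖f z‖ ^ p * Ψ (‖f z‖)) ∂μ) ^ (1/p) +
           (∫⁻ z in diskD, ENNReal.ofReal
              (‖g z‖ ^ p * Ψ (‖g z‖)) ∂μ) ^ (1/p)) := by
  obtain ⟨C₀, hC₀1, hpt⟩ := zzPointwise hp hΨ
  have hC₀0 : (0:ℝ) < C₀ := by linarith
  have hr : (0:ℝ) < 1/p := by positivity
  set Kr : ℝ := (2 * C₀) ^ (1/p) with hKr
  have hKr1 : 1 ≤ Kr := Real.one_le_rpow (by linarith) hr.le
  refine ⟨Kr, hKr1, fun f g hf hg _ _ => ?_⟩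
  set A : ℂ → ℝ≥0∞ := fun z => ENNReal.ofReal (‖f z‖ ^ p * Ψ (‖f z‖))
    with hA
  set B : ℂ → ℝ≥0∞ := fun z => ENNReal.ofReal (‖g z‖ ^ p * Ψ (‖g z‖))
    with hB
  have mabs : Measurable fun z => ‖f z‖ := continuous_norm.measurable.comp hf
  have mA : Measurable A := by
    apply ENNReal.measurable_ofReal.comp
    exact (mabs.pow_const p |>.mul (hΨm.comp mabs))
  -- pointwise inequality
  have hptz : ∀ z : ℂ, ENNReal.ofReal
      (‖f z + g z‖ ^ p * Ψ (‖f z + g z‖)) ≤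
      ENNReal.ofReal C₀ * (A z + B z) := by
    intro z
    have htri : ‖f z + g z‖ ≤ ‖f z‖ + ‖g z‖ :=
      norm_add_le _ _
    have h1 := hpt (‖f z + g z‖) (‖f z‖) (‖g z‖)
      (norm_nonneg _) (norm_nonneg _) (norm_nonneg _) htri
    have hfa := hΨ.1 (‖f z‖) (norm_nonneg _)
    have hga := hΨ.1 (‖g z‖) (norm_nonneg _)
    have hfa0 : (0:ℝ) ≤ ‖f z‖ ^ p * Ψ (‖f z‖) := by positivity
    have hga0 : (0:ℝ) ≤ ‖g z‖ ^ p * Ψ (‖g z‖) := by positivity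
    calc ENNReal.ofReal (‖f z + g z‖ ^ p * Ψ (‖f z + g z‖))
        ≤ ENNReal.ofReal (C₀ * (‖f z‖ ^ p * Ψ (‖f z‖) +
            ‖g z‖ ^ p * Ψ (‖g z‖))) := ENNReal.ofReal_le_ofReal h1
      _ = ENNReal.ofReal C₀ * (A z + B z) := by
          rw [ENNReal.ofReal_mul hC₀0.le, ENNReal.ofReal_add hfa0 hga0]
  set IS : ℝ≥0∞ := ∫⁻ z in diskD, ENNReal.ofReal
      (‖f z + g z‖ ^ p * Ψ (‖f z + g z‖)) ∂μ with hIS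
  set IA : ℝ≥0∞ := ∫⁻ z in diskD, A z ∂μ with hIA
  set IB : ℝ≥0∞ := ∫⁻ z in diskD, B z ∂μ with hIB
  have hIneq : IS ≤ ENNReal.ofReal C₀ * (IA + IB) := by
    calc IS ≤ ∫⁻ z in diskD, ENNReal.ofReal C₀ * (A z + B z) ∂μ := lintegral_mono hptz
      _ = ENNReal.ofReal C₀ * ∫⁻ z in diskD, (A z + B z) ∂μ :=
          lintegral_const_mul' _ _ ENNReal.ofReal_ne_top
      _ = ENNReal.ofReal C₀ * (IA + IB) := by rw [lintegral_add_left mA]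
  have hsum : (IA + IB) ^ (1/p) ≤ (2:ℝ≥0∞) ^ (1/p) * (IA ^ (1/p) + IB ^ (1/p)) := by
    have h2m : IA + IB ≤ 2 * max IA IB := by
      rw [two_mul]
      exact add_le_add (le_max_left _ _) (le_max_right _ _)
    calc (IA + IB) ^ (1/p) ≤ (2 * max IA IB) ^ (1/p) := ENNReal.rpow_le_rpow h2m hr.le
      _ = (2:ℝ≥0∞) ^ (1/p) * (max IA IB) ^ (1/p) := ENNReal.mul_rpow_of_nonneg _ _ hr.le
      _ ≤ (2:ℝ≥0∞) ^ (1/p) * (IA ^ (1/p) + IB ^ (1/p)) := by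
          gcongr
          rcases max_cases IA IB with ⟨h1, _⟩ | ⟨h1, _⟩ <;> rw [h1]
          · exact le_self_add
          · exact le_add_self
  have hofK : (ENNReal.ofReal C₀) ^ (1/p) * (2:ℝ≥0∞) ^ (1/p) = ENNReal.ofReal Kr := by
    rw [hKr, ENNReal.ofReal_rpow_of_pos hC₀0]
    have h2 : (2:ℝ≥0∞) = ENNReal.ofReal 2 := by norm_num
    rw [h2, ENNReal.ofReal_rpow_of_pos (by norm_num), ← ENNReal.ofReal_mul (by positivity),
      ← Real.mul_rpow hC₀0.le (by norm_num), mul_comm C₀ 2]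
  calc IS ^ (1/p) ≤ (ENNReal.ofReal C₀ * (IA + IB)) ^ (1/p) :=
        ENNReal.rpow_le_rpow hIneq hr.le
    _ = (ENNReal.ofReal C₀) ^ (1/p) * (IA + IB) ^ (1/p) :=
        ENNReal.mul_rpow_of_nonneg _ _ hr.le
    _ ≤ (ENNReal.ofReal C₀) ^ (1/p) * ((2:ℝ≥0∞) ^ (1/p) * (IA ^ (1/p) + IB ^ (1/p))) := by
        gcongr
    _ = ((ENNReal.ofReal C₀) ^ (1/p) * (2:ℝ≥0∞) ^ (1/p)) * (IA ^ (1/p) + IB ^ (1/p)) := by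
        rw [mul_assoc]
    _ = ENNReal.ofReal Kr * (IA ^ (1/p) + IB ^ (1/p)) := by rw [hofK]
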